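/- Let q ≥ 3, p = 1, and a = ⌈q/2⌉. Set E = 1, A = (1 − a)·τ + (a − q), F = q − a, B = 1 − τ, and G = (a − 1)·τ + 1. Then A·τ + B = E·τ⁴ + F·τ² + G, and each of A, B, E, F, G is a nonzero digit modulo τ². Consequently the element A·τ + B has a digit expansion of weight 2, while the right-hand side is a 2-NAF expansion of it of weight 3, so the 2-NAF is not a minimal digit expansion. -/

import Mathlib

noncomputable section

open Complex

/-- The base τ = p/2 + i√(q − 1/4). -/
def tauC (q p : ℤ) : ℂ := (p : ℂ) / 2 + Complex.I * (Real.sqrt ((q : ℝ) - 1/4) : ℝ)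

/-- The lattice ℤ[τ] = {a + bτ : a, b ∈ ℤ} as a subset of ℂ. -/
def Ztau (q p : ℤ) : Set ℂ := {z | ∃ a b : ℤ, z = (a : ℂ) + (b : ℂ) * tauC q p}

/-- τ^k divides z within ℤ[τ]. -/
def tauPowDvd (q p : ℤ) (k : ℕ) (z : ℂ) : Prop :=
  ∃ u ∈ Ztau q p, z = (tauC q p) ^ k * u

/-- η is a nonzero digit modulo τ^w: η ∈ ℤ[τ], τ ∤ η, and η has minimal norm in
its residue class modulo τ^w. -/
def IsNonzeroDigit (q p : ℤ) (w : ℕ) (η : ℂ) : Prop :=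
  η ∈ Ztau q p ∧ ¬ tauPowDvd q p 1 η ∧
    ∀ y ∈ Ztau q p, ‖η‖ ≤ ‖η - (tauC q p) ^ w * y‖

/-- The minimal norm digit set modulo τ^w. -/
def DigitSet (q p : ℤ) (w : ℕ) : Set ℂ := {0} ∪ {η | IsNonzeroDigit q p w η}

/-- σ is a digit expansion of z with digits in the minimal norm digit set modulo τ^w. -/
def IsExpansion (q p : ℤ) (w : ℕ) (z : ℂ) (σ : ℕ → ℂ) : Prop :=
  (Function.support σ).Finite ∧ (∀ ℓ, σ ℓ ∈ DigitSet q p w) ∧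
    z = ∑ᶠ ℓ, σ ℓ * (tauC q p) ^ ℓ

/-- The (Hamming) weight of an expansion: the number of nonzero digits. -/
def expWeight (σ : ℕ → ℂ) : ℕ := (Function.support σ).ncard

/-- σ is a width-w non-adjacent form: among any w consecutive digits at most one
is nonzero. -/
def IsNAF (w : ℕ) (σ : ℕ → ℂ) : Prop :=
  ∀ ℓ i j : ℕ, i < w → j < w → σ (ℓ + i) ≠ 0 → σ (ℓ + j) ≠ 0 → i = j

/-- The Voronoi cell of 0 for ℤ[τ]. -/
def VoronoiV (q p : ℤ) : Set ℂ :=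
  {z | ∀ y ∈ Ztau q p, ‖z‖ ≤ ‖z - y‖}

/-- The vertex v₀ of the Voronoi cell. -/
def v0C (q p : ℤ) : ℂ :=
  (p : ℂ) / 2 + Complex.I * ((((q : ℝ) - 1/2) / Real.sqrt (4 * (q : ℝ) - 1) : ℝ) : ℂ)

/-- The vertex v₁ of the Voronoi cell. -/
def v1C (q : ℤ) : ℂ := Complex.I * (((q : ℝ) / Real.sqrt (4 * (q : ℝ) - 1) : ℝ) : ℂ)

/-- The direction d = p·i·τ/√q. -/
def dC (q p : ℤ) : ℂ := (p : ℂ) * Complex.I * tauC q p / ((Real.sqrt q : ℝ) : ℂ)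

/-- d_w = d·(τ/√q)^w. -/
def dwC (q p : ℤ) (w : ℕ) : ℂ := dC q p * (tauC q p / ((Real.sqrt q : ℝ) : ℂ)) ^ w

/-- The height s of the rectangle R_w. -/
def sHeight (q : ℤ) : ℝ := Real.sqrt (((q : ℝ) - 1/4) / ((q : ℝ) + 2))

/-- The open rectangle R_w. -/
def Rw (q p : ℤ) (w : ℕ) : Set ℂ :=
  {z | ∃ t u : ℝ,
    Real.sqrt q < t ∧ t < Real.sqrt ((q : ℝ) ^ (w + 1) / (4 * (q : ℝ) - 1)) - Real.sqrt q ∧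
    0 < u ∧ u < sHeight q ∧
    z = (tauC q p) ^ w * v0C q p + (t : ℂ) * dwC q p w
        - (p : ℂ) * Complex.I * (u : ℂ) * dwC q p w}

/-- The lattice Λ_{τ/2} = {(aτ + bτ²)/2 : a, b ∈ ℤ}. -/
def LambdaHalf (q p : ℤ) : Set ℂ :=
  {z | ∃ a b : ℤ, z = ((a : ℂ) * tauC q p + (b : ℂ) * (tauC q p) ^ 2) / 2}

/-- The unit e_w = τ^{w+1}/q^{(w+1)/2}. -/
def ewC (q p : ℤ) (w : ℕ) : ℂ :=
  (tauC q p) ^ (w + 1) / (((q : ℝ) ^ (((w : ℝ) + 1) / 2) : ℝ) : ℂ)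

/-- The closed rectangle R̃_NH (narrow but high). -/
def RNH (q p : ℤ) (w : ℕ) : Set ℂ :=
  {z | ∃ t u : ℝ,
    0 ≤ t ∧ t ≤ sHeight q / (4 * (q : ℝ)) ∧
    |u| ≤ (q : ℝ) ^ 2 * Real.sqrt ((q : ℝ) + 2) ∧
    z = (tauC q p) ^ (w + 1) / 2 + ewC q p w * ((t : ℂ) + Complex.I * (u : ℂ))}

/-- The closed rectangle R̃_WL (wide but low). -/
def RWL (q p : ℤ) (w : ℕ) : Set ℂ :=
  {z | ∃ t u : ℝ,
    0 ≤ t ∧ t ≤ 4 * (q : ℝ) ^ ((3 - (w : ℝ)) / 2) * ((q : ℝ) - 1/4) ∧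
    |u| ≤ (q : ℝ) ^ (((w : ℝ) + 1) / 2) / (16 * (q : ℝ) * Real.sqrt ((q : ℝ) - 1/4)) ∧
    z = (tauC q p) ^ (w + 1) / 2 + ewC q p w * ((t : ℂ) + Complex.I * (u : ℂ))}


private lemma mnn (x y : ℤ) (hx : x ≤ 0) (hy : y ≤ 0) : 0 ≤ x * y := by nlinarith

private lemma mulPredNonneg (k : ℤ) : 0 ≤ k * (k - 1) := by
  rcases le_or_gt k 0 with h | h
  · exact mnn _ _ h (by omega)
  · exact mul_nonneg (by omega) (by omega)

private lemma key0 (q s t m n : ℤ) (hq : 3 ≤ q) (hs : |s| ≤ q^2) (ht : |t| ≤ q^3)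
    (hst : |s - t| ≤ q^3) (hm : 0 ≤ m) :
    s*m + t*n ≤ q^2*(m^2 + m*n + q*n^2) := by
  obtain ⟨hs1, hs2⟩ := abs_le.mp hs
  obtain ⟨ht1, ht2⟩ := abs_le.mp ht
  obtain ⟨hst1, hst2⟩ := abs_le.mp hst
  have hq2 : (0:ℤ) ≤ q^2 := sq_nonneg q
  have hq3 : (0:ℤ) ≤ q^3 := by positivity
  rcases le_or_gt 0 n with hn | hn
  · have h1 : s*m ≤ q^2*m := mul_le_mul_of_nonneg_right hs2 hm
    have h2 : t*n ≤ q^3*n := mul_le_mul_of_nonneg_right ht2 hn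
    have h3 : 0 ≤ q^2 * (m*(m-1)) := mul_nonneg hq2 (mulPredNonneg m)
    have h4 : 0 ≤ q^3 * (n*(n-1)) := mul_nonneg hq3 (mulPredNonneg n)
    have h5 : 0 ≤ q^2 * (m*n) := mul_nonneg hq2 (mul_nonneg hm hn)
    nlinarith [h1, h2, h3, h4, h5]
  · rcases le_or_gt 0 (m+n) with hmn | hmn
    · have h1 : s*(m+n) ≤ q^2*(m+n) := mul_le_mul_of_nonneg_right hs2 hmn
      have h2 : (s-t)*(-n) ≤ q^3*(-n) := mul_le_mul_of_nonneg_right hst2 (by omega)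
      have h3 : 0 ≤ q^2 * ((m+n)*(m-1)) := mul_nonneg hq2 (mul_nonneg hmn (by omega))
      have h4 : 0 ≤ q^3 * (n*(n+1)) := mul_nonneg hq3 (mnn _ _ (by omega) (by omega))
      nlinarith [h1, h2, h3, h4]
    · have h1 : (s-t)*m ≤ q^3*m := mul_le_mul_of_nonneg_right hst2 hm
      have h2 : t*(m+n) ≤ (-q^3)*(m+n) := mul_le_mul_of_nonpos_right ht1 (by omega)
      have h3 : 0 ≤ (m+n+1)*(m+n) := mnn _ _ (by omega) (by omega)
      have h4 : 0 ≤ (-n-1)*m := mul_nonneg (by omega) hm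
      have h5 : 0 ≤ (q-1)*(n*(n+1)) := mul_nonneg (by omega) (mnn _ _ (by omega) (by omega))
      have hcore : 0 ≤ m*(m+n) + q*(n*(n+1)) := by nlinarith [h3, h4, h5]
      have h6 : 0 ≤ q^2 * (m*(m+n) + q*(n*(n+1))) := mul_nonneg hq2 hcore
      nlinarith [h1, h2, h6]

private lemma key (q s t m n : ℤ) (hq : 3 ≤ q) (hs : |s| ≤ q^2) (ht : |t| ≤ q^3)
    (hst : |s - t| ≤ q^3) : s*m + t*n ≤ q^2*(m^2 + m*n + q*n^2) := by
  rcases le_or_gt 0 m with hm | hm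
  · exact key0 q s t m n hq hs ht hst hm
  · have h := key0 q (-s) (-t) (-m) (-n) hq (by rwa [abs_neg]) (by rwa [abs_neg])
      (by rw [show -s - -t = -(s-t) by ring, abs_neg]; exact hst) (by omega)
    nlinarith [h]

private lemma r_sq (q : ℤ) (hq : 3 ≤ q) : (Real.sqrt ((q:ℝ) - 1/4))^2 = (q:ℝ) - 1/4 := by
  rw [sq]
  refine Real.mul_self_sqrt ?_
  have : (3:ℝ) ≤ q := by exact_mod_cast hq
  linarith

private lemma tau_re (q : ℤ) : (tauC q 1).re = 1/2 := by simp [tauC]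

private lemma tau_im (q : ℤ) : (tauC q 1).im = Real.sqrt ((q:ℝ) - 1/4) := by simp [tauC]

private lemma tau_sq (q : ℤ) (hq : 3 ≤ q) : (tauC q 1)^2 = tauC q 1 - q := by
  have h : ((Real.sqrt ((q:ℝ) - 1/4) : ℝ) : ℂ)^2 = (q:ℂ) - 1/4 := by
    rw [← Complex.ofReal_pow, r_sq q hq]
    push_cast; ring
  unfold tauC
  push_cast
  linear_combination ((Real.sqrt ((q:ℝ) - 1/4) : ℝ) : ℂ)^2 * Complex.I_sq - h

private lemma elt_re (q x y : ℤ) : ((x:ℂ) + (y:ℂ) * tauC q 1).re = (x:ℝ) + (y:ℝ)/2 := by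
  simp [Complex.add_re, Complex.mul_re, tau_re, tau_im]
  ring

private lemma elt_im (q x y : ℤ) :
    ((x:ℂ) + (y:ℂ) * tauC q 1).im = (y:ℝ) * Real.sqrt ((q:ℝ) - 1/4) := by
  simp [Complex.add_im, Complex.mul_im, tau_re, tau_im]

private lemma normSq_elt (q x y : ℤ) (hq : 3 ≤ q) :
    Complex.normSq ((x:ℂ) + (y:ℂ) * tauC q 1) = ((x^2 + x*y + q*y^2 : ℤ) : ℝ) := by
  rw [Complex.normSq_apply, elt_re, elt_im]
  have h := r_sq q hq
  push_cast
  nlinarith [h]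

private lemma elt_inj (q x y x' y' : ℤ) (hq : 3 ≤ q)
    (h : (x:ℂ) + (y:ℂ) * tauC q 1 = (x':ℂ) + (y':ℂ) * tauC q 1) : x = x' ∧ y = y' := by
  have hr : 0 < Real.sqrt ((q:ℝ) - 1/4) := by
    refine Real.sqrt_pos.2 ?_
    have : (3:ℝ) ≤ q := by exact_mod_cast hq
    linarith
  have him := congrArg Complex.im h
  rw [elt_im, elt_im] at him
  have hy : (y:ℝ) = (y':ℝ) := mul_right_cancel₀ (ne_of_gt hr) him
  have hy' : y = y' := by exact_mod_cast hy
  have hre := congrArg Complex.re h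
  rw [elt_re, elt_re] at hre
  have hx : (x:ℝ) = (x':ℝ) := by rw [hy] at hre; linarith
  exact ⟨by exact_mod_cast hx, hy'⟩

private lemma elt_ne (q x y : ℤ) (hq : 3 ≤ q) (h : ¬(x = 0 ∧ y = 0)) :
    (x:ℂ) + (y:ℂ) * tauC q 1 ≠ 0 := by
  intro h0
  exact h (elt_inj q x y 0 0 hq (by simpa using h0))

private lemma isDigit (q u v : ℤ) (hq : 3 ≤ q) (hu : ¬ (q ∣ u))
    (hs : |u*(1-2*q) + v*q| ≤ q^2)
    (ht : |u*(1-3*q) + v*(q-2*q^2)| ≤ q^3)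
    (hst : |(u*(1-2*q) + v*q) - (u*(1-3*q) + v*(q-2*q^2))| ≤ q^3) :
    IsNonzeroDigit q 1 2 ((u:ℂ) + (v:ℂ) * tauC q 1) := by
  have htau := tau_sq q hq
  refine ⟨⟨u, v, rfl⟩, ?_, ?_⟩
  · rintro ⟨w, ⟨c, d, rfl⟩, hdvd⟩
    have h2 : (u:ℂ) + (v:ℂ) * tauC q 1 = ((-d*q : ℤ):ℂ) + ((c+d : ℤ):ℂ) * tauC q 1 := by
      rw [hdvd]; push_cast
      linear_combination (d:ℂ) * htau
    obtain ⟨h3, _⟩ := elt_inj q u v (-d*q) (c+d) hq h2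
    exact hu ⟨-d, by rw [h3]; ring⟩
  · rintro y ⟨m, n, rfl⟩
    have h2 : (u:ℂ) + (v:ℂ) * tauC q 1 - (tauC q 1)^2 * ((m:ℂ) + (n:ℂ) * tauC q 1)
        = ((u + q*(m+n) : ℤ):ℂ) + ((v - m - n + q*n : ℤ):ℂ) * tauC q 1 := by
      push_cast
      linear_combination ((-(m:ℂ) - (n:ℂ)) - (n:ℂ) * tauC q 1) * htau
    rw [Complex.norm_def, Complex.norm_def, h2]
    apply Real.sqrt_le_sqrt
    rw [normSq_elt q _ _ hq, normSq_elt q _ _ hq]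
    have hk := key q (u*(1-2*q) + v*q) (u*(1-3*q) + v*(q-2*q^2)) m n hq hs ht hst
    have hfin : u^2 + u*v + q*v^2 ≤
        (u + q*(m+n))^2 + (u + q*(m+n))*(v - m - n + q*n) + q*(v - m - n + q*n)^2 := by
      nlinarith [hk]
    exact_mod_cast hfin

set_option maxHeartbeats 2000000 in
/-- explicit counterexample to minimality of the 2-NAF for q ≥ 3,
p = 1. -/
theorem stmt14 (q p : ℤ) (hq : 3 ≤ q) (hp : p = 1) :
    let a : ℤ := ⌈(q : ℚ) / 2⌉
    let τ : ℂ := tauC q p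
    let E : ℂ := 1
    let A : ℂ := ((1 - a : ℤ) : ℂ) * τ + ((a - q : ℤ) : ℂ)
    let F : ℂ := ((q - a : ℤ) : ℂ)
    let B : ℂ := 1 - τ
    let G : ℂ := ((a - 1 : ℤ) : ℂ) * τ + 1
    A * τ + B = E * τ ^ 4 + F * τ ^ 2 + G ∧
    IsNonzeroDigit q p 2 A ∧ IsNonzeroDigit q p 2 B ∧ IsNonzeroDigit q p 2 E ∧
    IsNonzeroDigit q p 2 F ∧ IsNonzeroDigit q p 2 G ∧
    (∃ σ' : ℕ → ℂ, IsExpansion q p 2 (A * τ + B) σ' ∧ expWeight σ' = 2) ∧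
    (∃ σ : ℕ → ℂ, IsExpansion q p 2 (A * τ + B) σ ∧ IsNAF 2 σ ∧ expWeight σ = 3) := by
  subst hp
  intro a τ E A F B G
  have ha : a = ⌈(q:ℚ)/2⌉ := rfl
  have hτ : τ = tauC q 1 := rfl
  have hEd : E = 1 := rfl
  have hAd : A = ((1 - a : ℤ) : ℂ) * τ + ((a - q : ℤ) : ℂ) := rfl
  have hFd : F = ((q - a : ℤ) : ℂ) := rfl
  have hBd : B = 1 - τ := rfl
  have hGd : G = ((a - 1 : ℤ) : ℂ) * τ + 1 := rfl
  clear_value a τ E A F B G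
  -- integer bounds on a
  have ha1 : q ≤ 2*a := by
    have h := Int.le_ceil ((q:ℚ)/2)
    rw [← ha] at h
    have h2 : (q:ℚ) ≤ 2*a := by linarith
    exact_mod_cast h2
  have ha2 : 2*a ≤ q + 1 := by
    have h := Int.ceil_lt_add_one ((q:ℚ)/2)
    rw [← ha] at h
    have h2 : (2*a:ℚ) < q + 2 := by linarith
    have h3 : (2*a:ℤ) < q + 2 := by exact_mod_cast h2
    omega
  have hage : 2 ≤ a := by omega
  have htau := tau_sq q hq
  -- part 1: the algebraic identity
  have heq : A * τ + B = E * τ ^ 4 + F * τ ^ 2 + G := by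
    rw [hAd, hBd, hEd, hFd, hGd, hτ]
    push_cast
    linear_combination (-(tauC q 1)^2 - tauC q 1) * htau
  -- nlinarith helper facts
  have hb1 : (0:ℤ) ≤ 2*a - q := by omega
  have hb2 : (0:ℤ) ≤ q + 1 - 2*a := by omega
  have hq0 : (0:ℤ) ≤ q := by omega
  have hp1 : (0:ℤ) ≤ (2*a - q)*q := mul_nonneg hb1 hq0
  have hp2 : (0:ℤ) ≤ (q + 1 - 2*a)*q := mul_nonneg hb2 hq0
  have hp3 : (0:ℤ) ≤ (2*a - q)*q^2 := mul_nonneg hb1 (sq_nonneg q)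
  have hp4 : (0:ℤ) ≤ (q + 1 - 2*a)*q^2 := mul_nonneg hb2 (sq_nonneg q)
  have hp5 : (0:ℤ) ≤ (q + 1 - 2*a)*(2*a - q) := mul_nonneg hb2 hb1
  have hp6 : (0:ℤ) ≤ (q + 1 - 2*a)*(q^2 - 2*q) := mul_nonneg hb2 (by nlinarith)
  -- digits
  have hdE : IsNonzeroDigit q 1 2 E := by
    have he : E = ((1:ℤ):ℂ) + ((0:ℤ):ℂ) * tauC q 1 := by rw [hEd]; push_cast; ring
    rw [he]
    refine isDigit q 1 0 hq (fun h => by have := Int.le_of_dvd one_pos h; omega) ?_ ?_ ?_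
    all_goals rw [abs_le]; constructor <;> nlinarith [hp1, hp2, hp3, hp4, hp5, hp6]
  have hdF : IsNonzeroDigit q 1 2 F := by
    have he : F = ((q - a:ℤ):ℂ) + ((0:ℤ):ℂ) * tauC q 1 := by rw [hFd]; push_cast; ring
    rw [he]
    refine isDigit q (q - a) 0 hq ?_ ?_ ?_ ?_
    · intro h
      have h2 : q ∣ a := by
        have h3 := dvd_sub (dvd_refl q) h
        simpa using h3
      have h4 := Int.le_of_dvd (by omega) h2
      omega
    all_goals rw [abs_le]; constructor <;> nlinarith [hp1, hp2, hp3, hp4, hp5, hp6]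
  have hdB : IsNonzeroDigit q 1 2 B := by
    have he : B = ((1:ℤ):ℂ) + ((-1:ℤ):ℂ) * tauC q 1 := by rw [hBd, hτ]; push_cast; ring
    rw [he]
    refine isDigit q 1 (-1) hq ?_ ?_ ?_ ?_
    · intro h
      have h4 := Int.le_of_dvd (by omega) h
      omega
    all_goals rw [abs_le]; constructor <;> nlinarith [hp1, hp2, hp3, hp4, hp5, hp6]
  have hdA : IsNonzeroDigit q 1 2 A := by
    have he : A = ((a - q:ℤ):ℂ) + ((1 - a:ℤ):ℂ) * tauC q 1 := by rw [hAd, hτ]; push_cast; ring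
    rw [he]
    refine isDigit q (a - q) (1 - a) hq ?_ ?_ ?_ ?_
    · intro h
      have h2 : q ∣ a := by
        have h3 := dvd_add h (dvd_refl q)
        simpa using h3
      have h4 := Int.le_of_dvd (by omega) h2
      omega
    all_goals rw [abs_le]; constructor <;> nlinarith [hp1, hp2, hp3, hp4, hp5, hp6]
  have hdG : IsNonzeroDigit q 1 2 G := by
    have he : G = ((1:ℤ):ℂ) + ((a - 1:ℤ):ℂ) * tauC q 1 := by rw [hGd, hτ]; push_cast; ring
    rw [he]
    refine isDigit q 1 (a - 1) hq ?_ ?_ ?_ ?_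
    · intro h
      have h4 := Int.le_of_dvd (by omega) h
      omega
    all_goals rw [abs_le]; constructor <;> nlinarith [hp1, hp2, hp3, hp4, hp5, hp6]
  -- nonzeroness of digits
  have hEne : E ≠ 0 := by rw [hEd]; exact one_ne_zero
  have hFne : F ≠ 0 := by
    rw [hFd]
    have he : ((q - a:ℤ):ℂ) = ((q - a:ℤ):ℂ) + ((0:ℤ):ℂ) * tauC q 1 := by push_cast; ring
    rw [he]
    exact elt_ne q (q - a) 0 hq (by omega)
  have hBne : B ≠ 0 := by
    have he : B = ((1:ℤ):ℂ) + ((-1:ℤ):ℂ) * tauC q 1 := by rw [hBd, hτ]; push_cast; ring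
    rw [he]
    exact elt_ne q 1 (-1) hq (by omega)
  have hAne : A ≠ 0 := by
    have he : A = ((a - q:ℤ):ℂ) + ((1 - a:ℤ):ℂ) * tauC q 1 := by rw [hAd, hτ]; push_cast; ring
    rw [he]
    exact elt_ne q (a - q) (1 - a) hq (by omega)
  have hGne : G ≠ 0 := by
    have he : G = ((1:ℤ):ℂ) + ((a - 1:ℤ):ℂ) * tauC q 1 := by rw [hGd, hτ]; push_cast; ring
    rw [he]
    exact elt_ne q 1 (a - 1) hq (by omega)
  have hmem0 : (0:ℂ) ∈ DigitSet q 1 2 := Or.inl rfl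
  refine ⟨heq, hdA, hdB, hdE, hdF, hdG, ?_, ?_⟩
  · -- weight-2 expansion
    refine ⟨fun ℓ => if ℓ = 0 then B else if ℓ = 1 then A else 0, ⟨?_, ?_, ?_⟩, ?_⟩
    · refine Set.Finite.subset (Set.toFinite ({0, 1} : Set ℕ)) ?_
      intro x hx
      simp only [Function.mem_support] at hx
      rcases x with _ | _ | x
      · exact Set.mem_insert _ _
      · exact Set.mem_insert_of_mem _ rfl
      · simp at hx
    · intro ℓ
      rcases ℓ with _ | _ | ℓ
      · simpa using (by have h : B ∈ DigitSet q 1 2 := Or.inr hdB; exact h)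
      · simpa using (by have h : A ∈ DigitSet q 1 2 := Or.inr hdA; exact h)
      · simpa using hmem0
    · rw [finsum_eq_finset_sum_of_support_subset _ (s := {0, 1}) ?_]
      · rw [hτ]
        norm_num
        ring
      · intro x hx
        simp only [Function.mem_support] at hx
        rcases x with _ | _ | x
        · simp
        · simp
        · simp at hx
    · rw [expWeight]
      have hsupp : Function.support (fun ℓ => if ℓ = 0 then B else if ℓ = 1 then A else (0:ℂ))
          = {0, 1} := by
        ext ℓ
        rcases ℓ with _ | _ | ℓ <;>
          simp [Function.mem_support, hBne, hAne, Set.mem_insert_iff]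
      rw [hsupp]
      exact Set.ncard_pair (by norm_num)
  · -- weight-3 2-NAF expansion
    refine ⟨fun ℓ => if ℓ = 0 then G else if ℓ = 2 then F else if ℓ = 4 then E else 0,
      ⟨?_, ?_, ?_⟩, ?_, ?_⟩
    · refine Set.Finite.subset (Set.toFinite ({0, 2, 4} : Set ℕ)) ?_
      intro x hx
      simp only [Function.mem_support] at hx
      by_cases h0 : x = 0
      · simp [h0]
      by_cases h2 : x = 2
      · simp [h2]
      by_cases h4 : x = 4
      · simp [h4]
      · simp [h0, h2, h4] at hx
    · intro ℓ
      by_cases h0 : ℓ = 0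
      · simpa [h0] using (by have h : G ∈ DigitSet q 1 2 := Or.inr hdG; exact h)
      by_cases h2 : ℓ = 2
      · simpa [h0, h2] using (by have h : F ∈ DigitSet q 1 2 := Or.inr hdF; exact h)
      by_cases h4 : ℓ = 4
      · simpa [h0, h2, h4] using (by have h : E ∈ DigitSet q 1 2 := Or.inr hdE; exact h)
      · simpa [h0, h2, h4] using hmem0
    · rw [finsum_eq_finset_sum_of_support_subset _ (s := {0, 2, 4}) ?_]
      · rw [heq, hτ]
        norm_num
        ring
      · intro x hx
        simp only [Function.mem_support] at hx
        by_cases h0 : x = 0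
        · simp [h0]
        by_cases h2 : x = 2
        · simp [h2]
        by_cases h4 : x = 4
        · simp [h4]
        · simp [h0, h2, h4] at hx
    · -- NAF
      intro ℓ i j hi hj hne1 hne2
      have hval : ∀ x : ℕ, (if x = 0 then G else if x = 2 then F else if x = 4 then E else (0:ℂ)) ≠ 0
          → x = 0 ∨ x = 2 ∨ x = 4 := by
        intro x hx
        by_contra hcon
        push_neg at hcon
        simp [hcon.1, hcon.2.1, hcon.2.2] at hx
      have h1 := hval _ hne1
      have h2 := hval _ hne2
      omega
    · rw [expWeight]
      have hsupp : Function.support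
          (fun ℓ => if ℓ = 0 then G else if ℓ = 2 then F else if ℓ = 4 then E else (0:ℂ))
          = {0, 2, 4} := by
        ext ℓ
        simp only [Function.mem_support, Set.mem_insert_iff, Set.mem_singleton_iff]
        constructor
        · intro hx
          by_contra hcon
          push_neg at hcon
          simp [hcon.1, hcon.2.1, hcon.2.2] at hx
        · rintro (rfl | rfl | rfl) <;> simp [hGne, hFne, hEne]
      rw [hsupp]
      rw [Set.ncard_insert_of_notMem (by norm_num) (Set.toFinite _),
        Set.ncard_insert_of_notMem (by norm_num) (Set.finite_singleton 4),
        Set.ncard_singleton]
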